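/- The number of standard partitions (I, Ī) of [2n] into two complementary parts with both |I| and |Ī| even equals C(2n−1, n); equivalently, the number of standard Young tableaux with 2n cells, at most two rows, and each row of even length equals C(2n−1, n). -/

import Mathlib

open scoped Classical
noncomputable section

/-- `(I, Ī)` (with `Ī = [2n] ∖ I`) is a standard partition of `[2n]`: writing
`I = {i_1 < … < i_a}` and `Ī = {j_1 < … < j_b}`, we have `a ≥ b` and `i_k < j_k` for all
`1 ≤ k ≤ b`.  Such partitions correspond to standard Young tableaux of size `2n` with at
most two rows (first row `I`, second row `Ī`). -/
def IsStandardPart (n : ℕ) (I : Finset ℕ) : Prop :=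
  I ⊆ Finset.Icc 1 (2 * n) ∧
  (Finset.Icc 1 (2 * n) \ I).card ≤ I.card ∧
  ∀ k < (Finset.Icc 1 (2 * n) \ I).card,
    (I.sort (· ≤ ·)).getD k 0 < ((Finset.Icc 1 (2 * n) \ I).sort (· ≤ ·)).getD k 0



theorem sort_getD_le_iff (s : Finset ℕ) (m k : ℕ) (hk : k < s.card) :
    (s.sort (· ≤ ·)).getD k 0 ≤ m ↔ k < (s.filter (· ≤ m)).card := by
  classical
  set l := s.sort (· ≤ ·) with hl
  have hlen : l.length = s.card := Finset.length_sort _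
  have hkl : k < l.length := hlen ▸ hk
  have hget : l.getD k 0 = l.get ⟨k, hkl⟩ := List.getD_eq_get l 0 ⟨k, hkl⟩
  have hsorted : List.Pairwise (· < ·) l := s.sortedLT_sort.pairwise
  constructor
  · intro h
    have hcard : (Finset.range (k+1)).card ≤ (s.filter (· ≤ m)).card := by
      apply Finset.card_le_card_of_injOn (fun i => l.getD i 0)
      · intro i hi
        simp only [Finset.mem_coe, Finset.mem_range] at hi
        have hil : i < l.length := lt_of_le_of_lt (Nat.lt_succ_iff.1 hi) hkl
        have hgi : l.getD i 0 = l.get ⟨i, hil⟩ := List.getD_eq_get l 0 ⟨i, hil⟩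
        have hmem : l.get ⟨i, hil⟩ ∈ s := (Finset.mem_sort _).1 (List.get_mem l ⟨i, hil⟩)
        have hle : l.get ⟨i, hil⟩ ≤ l.get ⟨k, hkl⟩ := by
          rcases eq_or_lt_of_le (Nat.lt_succ_iff.1 hi) with h' | h'
          · subst h'; exact le_rfl
          · exact (hsorted.rel_get_of_lt (by simpa [Fin.lt_def] using h')).le
        refine Finset.mem_filter.2 ⟨(show l.getD i 0 ∈ s from hgi ▸ hmem), ?_⟩
        show l.getD i 0 ≤ m
        rw [hgi]; exact hle.trans (hget ▸ h)
      · intro i hi j hj hij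
        simp only [Finset.coe_range, Set.mem_Iio] at hi hj
        have hil : i < l.length := lt_of_le_of_lt (Nat.lt_succ_iff.1 hi) hkl
        have hjl : j < l.length := lt_of_le_of_lt (Nat.lt_succ_iff.1 hj) hkl
        simp only at hij
        rw [List.getD_eq_get l 0 ⟨i, hil⟩, List.getD_eq_get l 0 ⟨j, hjl⟩] at hij
        by_contra hne
        rcases Nat.lt_or_ge i j with h' | h'
        · exact absurd hij (ne_of_lt (hsorted.rel_get_of_lt (by simpa [Fin.lt_def] using h')))
        · rcases eq_or_lt_of_le h' with h'' | h''
          · exact hne h''.symm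
          · exact absurd hij.symm (ne_of_lt (hsorted.rel_get_of_lt (by simpa [Fin.lt_def] using h'')))
    simpa using hcard
  · intro h
    by_contra hm
    push_neg at hm
    have hsub : s.filter (· ≤ m) ⊆ (Finset.range k).image (fun i => l.getD i 0) := by
      intro x hx
      simp only [Finset.mem_filter] at hx
      obtain ⟨hxs, hxm⟩ := hx
      have hxl : x ∈ l := (Finset.mem_sort _).2 hxs
      obtain ⟨i, hi⟩ := List.mem_iff_get.1 hxl
      have hik : (i : ℕ) < k := by
        by_contra hik
        push_neg at hik
        have hle : l.get ⟨k, hkl⟩ ≤ l.get i := by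
          rcases eq_or_lt_of_le hik with h' | h'
          · have : (⟨k, hkl⟩ : Fin l.length) = i := Fin.ext h'
            rw [this]
          · exact (hsorted.rel_get_of_lt (by simpa [Fin.lt_def] using h')).le
        rw [hi] at hle
        rw [hget] at hm
        omega
      simp only [Finset.mem_image, Finset.mem_range]
      exact ⟨i, hik, by rw [List.getD_eq_get l 0 i]; exact hi⟩
    have h1 := Finset.card_le_card hsub
    have h2 := Finset.card_image_le (s := Finset.range k) (f := fun i => l.getD i 0)
    simp only [Finset.card_range] at h2
    omega

theorem sort_getD_mem (s : Finset ℕ) (k : ℕ) (hk : k < s.card) :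
    (s.sort (· ≤ ·)).getD k 0 ∈ s := by
  have hkl : k < (s.sort (· ≤ ·)).length := by
    rw [Finset.length_sort]; exact hk
  rw [List.getD_eq_get (s.sort (· ≤ ·)) 0 ⟨k, hkl⟩]
  exact (Finset.mem_sort _).1 (List.get_mem _ ⟨k, hkl⟩)

/-- prefix dominance -/
def Dm (m : ℕ) (I : Finset ℕ) : Prop :=
  ∀ t, (((Finset.Icc 1 m) \ I).filter (· ≤ t)).card ≤ (I.filter (· ≤ t)).card

theorem pair_iff (A B : Finset ℕ) (M : ℕ) (hd : Disjoint A B)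
    (hA : ∀ x ∈ A, x ≤ M) (hB : ∀ x ∈ B, x ≤ M) :
    (B.card ≤ A.card ∧ ∀ k < B.card,
        (A.sort (· ≤ ·)).getD k 0 < (B.sort (· ≤ ·)).getD k 0) ↔
      ∀ t, (B.filter (· ≤ t)).card ≤ (A.filter (· ≤ t)).card := by
  constructor
  · rintro ⟨hba, hk⟩ t
    set c := (B.filter (· ≤ t)).card with hc
    rcases Nat.eq_zero_or_pos c with h0 | h0
    · omega
    have hcB : c ≤ B.card := Finset.card_filter_le _ _
    have hc1B : c - 1 < B.card := by omega
    have hgB : (B.sort (· ≤ ·)).getD (c-1) 0 ≤ t :=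
      (sort_getD_le_iff B t (c-1) hc1B).2 (by omega)
    have hc1A : c - 1 < A.card := lt_of_lt_of_le hc1B hba
    have hgA : (A.sort (· ≤ ·)).getD (c-1) 0 ≤ t :=
      le_trans (hk _ hc1B).le hgB
    have := (sort_getD_le_iff A t (c-1) hc1A).1 hgA
    omega
  · intro h
    have hba : B.card ≤ A.card := by
      have := h M
      rwa [Finset.filter_true_of_mem hB, Finset.filter_true_of_mem hA] at this
    refine ⟨hba, fun k hkB => ?_⟩
    have hkA : k < A.card := lt_of_lt_of_le hkB hba
    set m := (B.sort (· ≤ ·)).getD k 0 with hm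
    have h1 : k < (B.filter (· ≤ m)).card := (sort_getD_le_iff B m k hkB).1 le_rfl
    have h2 : k < (A.filter (· ≤ m)).card := lt_of_lt_of_le h1 (h m)
    have h3 : (A.sort (· ≤ ·)).getD k 0 ≤ m := (sort_getD_le_iff A m k hkA).2 h2
    have h4 : (A.sort (· ≤ ·)).getD k 0 ∈ A := sort_getD_mem A k hkA
    have h5 : (B.sort (· ≤ ·)).getD k 0 ∈ B := sort_getD_mem B k hkB
    rcases lt_or_eq_of_le h3 with h' | h'
    · exact h'
    · exact absurd (h' ▸ h5) (Finset.disjoint_left.1 hd h4)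

theorem std_iff (n : ℕ) (I : Finset ℕ) :
    IsStandardPart n I ↔ I ⊆ Finset.Icc 1 (2*n) ∧ Dm (2*n) I := by
  unfold IsStandardPart Dm
  constructor
  · rintro ⟨hsub, h1, h2⟩
    refine ⟨hsub, ?_⟩
    exact (pair_iff I _ (2*n) Finset.disjoint_sdiff
      (fun x hx => (Finset.mem_Icc.1 (hsub hx)).2)
      (fun x hx => (Finset.mem_Icc.1 (Finset.mem_sdiff.1 hx).1).2)).1 ⟨h1, h2⟩
  · rintro ⟨hsub, h⟩
    refine ⟨hsub, ?_⟩
    exact (pair_iff I _ (2*n) Finset.disjoint_sdiff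
      (fun x hx => (Finset.mem_Icc.1 (hsub hx)).2)
      (fun x hx => (Finset.mem_Icc.1 (Finset.mem_sdiff.1 hx).1).2)).2 h

theorem filter_full {S : Finset ℕ} {M t : ℕ} (h : ∀ x ∈ S, x ≤ M) (ht : M ≤ t) :
    S.filter (· ≤ t) = S :=
  Finset.filter_true_of_mem (fun x hx => le_trans (h x hx) ht)

theorem dm_mem_iff (m : ℕ) (I : Finset ℕ) (hI : I ⊆ Finset.Icc 1 (m+1)) (hmem : m+1 ∈ I) :
    Dm (m+1) I ↔ Dm m (I.erase (m+1)) := by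
  have E1 : Finset.Icc 1 (m+1) \ I = Finset.Icc 1 m \ (I.erase (m+1)) := by
    ext x
    simp only [Finset.mem_sdiff, Finset.mem_Icc, Finset.mem_erase]
    constructor
    · rintro ⟨⟨h1, h2⟩, h3⟩
      have : x ≠ m+1 := fun h => h3 (h ▸ hmem)
      exact ⟨⟨h1, by omega⟩, fun ⟨hne, hxI⟩ => h3 hxI⟩
    · rintro ⟨⟨h1, h2⟩, h3⟩
      refine ⟨⟨h1, by omega⟩, fun hxI => h3 ⟨by omega, hxI⟩⟩
  have E2 : ∀ t, t ≤ m → I.filter (· ≤ t) = (I.erase (m+1)).filter (· ≤ t) := by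
    intro t ht
    ext x
    simp only [Finset.mem_filter, Finset.mem_erase]
    constructor
    · rintro ⟨h1, h2⟩
      exact ⟨⟨by omega, h1⟩, h2⟩
    · rintro ⟨⟨h1, h2⟩, h3⟩
      exact ⟨h2, h3⟩
  have hBle : ∀ x ∈ Finset.Icc 1 m \ (I.erase (m+1)), x ≤ m := by
    intro x hx
    exact (Finset.mem_Icc.1 (Finset.mem_sdiff.1 hx).1).2
  have hAle : ∀ x ∈ I.erase (m+1), x ≤ m := by
    intro x hx
    rcases Finset.mem_erase.1 hx with ⟨hne, hxI⟩
    have := (Finset.mem_Icc.1 (hI hxI)).2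
    omega
  constructor
  · intro h t
    rcases le_or_gt t m with ht | ht
    · have := h t
      rw [E1, E2 t ht] at this
      exact this
    · have hm := h m
      rw [E1, E2 m le_rfl] at hm
      calc ((Finset.Icc 1 m \ I.erase (m+1)).filter (· ≤ t)).card
          = ((Finset.Icc 1 m \ I.erase (m+1)).filter (· ≤ m)).card := by
            rw [filter_full hBle le_rfl, filter_full hBle ht.le]
        _ ≤ ((I.erase (m+1)).filter (· ≤ m)).card := by
            exact hm
        _ ≤ ((I.erase (m+1)).filter (· ≤ t)).card := by
            apply Finset.card_le_card
            apply Finset.monotone_filter_right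
            intro x hx; omega
  · intro h t
    rw [E1]
    calc ((Finset.Icc 1 m \ I.erase (m+1)).filter (· ≤ t)).card
        ≤ ((I.erase (m+1)).filter (· ≤ t)).card := h t
      _ ≤ (I.filter (· ≤ t)).card :=
          Finset.card_le_card (Finset.filter_subset_filter _ (Finset.erase_subset _ _))

theorem dm_notmem_iff (m : ℕ) (I : Finset ℕ) (hI : I ⊆ Finset.Icc 1 m) :
    Dm (m+1) I ↔ Dm m I ∧ m+1 ≤ 2*I.card := by
  have hnm : m+1 ∉ I := fun h => by
    have := (Finset.mem_Icc.1 (hI h)).2; omega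
  have E3 : Finset.Icc 1 (m+1) \ I = insert (m+1) (Finset.Icc 1 m \ I) := by
    ext x
    simp only [Finset.mem_sdiff, Finset.mem_Icc, Finset.mem_insert]
    constructor
    · rintro ⟨⟨h1, h2⟩, h3⟩
      rcases Nat.eq_or_lt_of_le h2 with h | h
      · exact Or.inl h
      · exact Or.inr ⟨⟨h1, by omega⟩, h3⟩
    · rintro (h | ⟨⟨h1, h2⟩, h3⟩)
      · exact ⟨⟨by omega, by omega⟩, h ▸ hnm⟩
      · exact ⟨⟨h1, by omega⟩, h3⟩
  have hnotin : m+1 ∉ Finset.Icc 1 m \ I := fun h => by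
    have := (Finset.mem_Icc.1 (Finset.mem_sdiff.1 h).1).2; omega
  have hBle : ∀ x ∈ Finset.Icc 1 m \ I, x ≤ m := fun x hx =>
    (Finset.mem_Icc.1 (Finset.mem_sdiff.1 hx).1).2
  have hAle : ∀ x ∈ I, x ≤ m := fun x hx => (Finset.mem_Icc.1 (hI hx)).2
  have hcardB : (Finset.Icc 1 m \ I).card = m - I.card := by
    rw [Finset.card_sdiff_of_subset hI, Nat.card_Icc]; omega
  have hcardI : I.card ≤ m := by
    have := Finset.card_le_card hI
    rwa [Nat.card_Icc] at this
  have E4 : ∀ t, t ≤ m →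
      ((insert (m+1) (Finset.Icc 1 m \ I)).filter (· ≤ t)) = (Finset.Icc 1 m \ I).filter (· ≤ t) := by
    intro t ht
    rw [Finset.filter_insert]
    simp only [show ¬ (m+1 ≤ t) by omega, if_false]
  constructor
  · intro h
    constructor
    · intro t
      rcases le_or_gt t m with ht | ht
      · have := h t
        rw [E3, E4 t ht] at this
        exact this
      · have hm := h m
        rw [E3, E4 m le_rfl] at hm
        calc ((Finset.Icc 1 m \ I).filter (· ≤ t)).card
            = ((Finset.Icc 1 m \ I).filter (· ≤ m)).card := by
              rw [filter_full hBle le_rfl, filter_full hBle ht.le]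
          _ ≤ (I.filter (· ≤ m)).card := hm
          _ ≤ (I.filter (· ≤ t)).card := by
              apply Finset.card_le_card
              apply Finset.monotone_filter_right
              intro x hx; omega
    · have := h (m+1)
      rw [E3, filter_full (S := insert (m+1) (Finset.Icc 1 m \ I))
        (M := m+1) ?hS le_rfl, filter_full (M := m) hAle (by omega),
        Finset.card_insert_of_notMem hnotin, hcardB] at this
      · omega
      case hS =>
        intro x hx
        rcases Finset.mem_insert.1 hx with h' | h'
        · omega
        · have := hBle x h'; omega
  · rintro ⟨hd, hc⟩ t
    rw [E3]
    rcases le_or_gt t m with ht | ht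
    · rw [E4 t ht]
      exact hd t
    · rw [filter_full (S := insert (m+1) (Finset.Icc 1 m \ I)) (M := m+1)
        ?hS (by omega), filter_full (M := m) hAle (by omega),
        Finset.card_insert_of_notMem hnotin, hcardB]
      · omega
      case hS =>
        intro x hx
        rcases Finset.mem_insert.1 hx with h' | h'
        · omega
        · have := hBle x h'; omega


theorem choose_dec {m k : ℕ} (h : m ≤ 2*k) : Nat.choose m (k+1) ≤ Nat.choose m k := by
  rcases Nat.lt_or_ge m (k+1) with h' | h'
  · simp [Nat.choose_eq_zero_of_lt h']
  · have h1 : Nat.choose m (k+1) = Nat.choose m (m - (k+1)) := (Nat.choose_symm h').symm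
    have h2 : Nat.choose m k = Nat.choose m (m - k) := (Nat.choose_symm (by omega)).symm
    have hx : m - (k+1) < m/2 := by omega
    have h3 := Nat.choose_le_succ_of_lt_half_left (n := m) hx
    have h4 : m - (k+1) + 1 = m - k := by omega
    rw [h1, h2, ← h4]
    exact h3

noncomputable def v (m a : ℕ) : ℕ := if m ≤ 2*a then Nat.choose m a - Nat.choose m (a+1) else 0

theorem v_rec (m a' : ℕ) :
    v (m+1) (a'+1) = v m a' + (if m+1 ≤ 2*(a'+1) then v m (a'+1) else 0) := by
  unfold v
  by_cases hc : m+1 ≤ 2*(a'+1)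
  · have hma : m ≤ 2*(a'+1) := by omega
    have hm1 : m+1 ≤ 2*(a'+1) := hc
    simp only [hc, hma, if_true]
    have p1 : Nat.choose (m+1) (a'+1) = Nat.choose m a' + Nat.choose m (a'+1) :=
      Nat.choose_succ_succ m a'
    have p2 : Nat.choose (m+1) (a'+1+1) = Nat.choose m (a'+1) + Nat.choose m (a'+1+1) :=
      Nat.choose_succ_succ m (a'+1)
    have hz : Nat.choose m (a'+1+1) ≤ Nat.choose m (a'+1) := choose_dec (by omega)
    by_cases hd : m ≤ 2*a'
    · have hy : Nat.choose m (a'+1) ≤ Nat.choose m a' := choose_dec hd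
      simp only [hd, if_true]
      omega
    · have hm : m = 2*a'+1 := by omega
      have hxy : Nat.choose m a' = Nat.choose m (a'+1) := by
        subst hm; exact (Nat.choose_symm_half a').symm
      simp only [hd, if_false]
      omega
  · have h2 : ¬ (m ≤ 2*a') := by omega
    have h3 : ¬ (m+1 ≤ 2*(a'+1)) := hc
    simp [h2, h3]

def Tst (m a : ℕ) : Finset (Finset ℕ) :=
  ((Finset.Icc 1 m).powerset).filter (fun I => Dm m I ∧ I.card = a)

theorem mem_Tst {m a : ℕ} {I : Finset ℕ} :
    I ∈ Tst m a ↔ I ⊆ Finset.Icc 1 m ∧ Dm m I ∧ I.card = a := by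
  simp [Tst]

theorem tst_card_zero (a : ℕ) : (Tst 0 a).card = v 0 a := by
  have hIcc : Finset.Icc 1 0 = (∅ : Finset ℕ) := by
    apply Finset.Icc_eq_empty; omega
  by_cases ha : a = 0
  · subst ha
    have : Tst 0 0 = {∅} := by
      ext I
      rw [mem_Tst, Finset.mem_singleton, hIcc]
      constructor
      · rintro ⟨h1, _, _⟩; exact Finset.subset_empty.1 h1
      · rintro rfl
        refine ⟨Finset.Subset.refl _, fun t => ?_, Finset.card_empty⟩
        simp [hIcc]
    rw [this]
    simp [v]
  · have : Tst 0 a = ∅ := by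
      apply Finset.eq_empty_of_forall_notMem
      intro I hI
      rw [mem_Tst, hIcc] at hI
      obtain ⟨hsub, _, hcard⟩ := hI
      rw [Finset.subset_empty.1 hsub] at hcard
      simp at hcard
      exact ha hcard.symm
    rw [this]
    simp only [Finset.card_empty, v]
    rw [if_pos (by omega)]
    rw [Nat.choose_eq_zero_of_lt (by omega), Nat.choose_eq_zero_of_lt (by omega)]

theorem tst_card (m a : ℕ) : (Tst m a).card = v m a := by
  induction m generalizing a with
  | zero => exact tst_card_zero a
  | succ m ih =>
    rcases Nat.eq_zero_or_pos a with rfl | hapos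
    · have : Tst (m+1) 0 = ∅ := by
        apply Finset.eq_empty_of_forall_notMem
        intro I hI
        rw [mem_Tst] at hI
        obtain ⟨hsub, hdm, hcard⟩ := hI
        have hI0 : I = ∅ := Finset.card_eq_zero.1 hcard
        subst hI0
        have := hdm (m+1)
        have hfull : (Finset.Icc 1 (m+1) \ ∅).filter (· ≤ m+1) = Finset.Icc 1 (m+1) := by
          rw [Finset.sdiff_empty]
          apply filter_full (M := m+1) _ le_rfl
          intro x hx; exact (Finset.mem_Icc.1 hx).2
        rw [hfull] at this
        simp only [Finset.filter_empty, Finset.card_empty, Nat.card_Icc] at this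
        omega
      rw [this]
      simp only [Finset.card_empty, v]
      rw [if_neg (by omega)]
    · obtain ⟨a', rfl⟩ : ∃ a', a = a'+1 := ⟨a-1, by omega⟩
      rw [← Finset.card_filter_add_card_filter_not
        (s := Tst (m+1) (a'+1)) (p := fun I => m+1 ∈ I)]
      have hP1 : ((Tst (m+1) (a'+1)).filter (fun I => m+1 ∈ I)).card = (Tst m a').card := by
        refine Finset.card_bij' (fun I _ => I.erase (m+1)) (fun J _ => insert (m+1) J) ?hi ?hj ?left ?right
        case hi =>
          intro I hI
          rw [Finset.mem_filter, mem_Tst] at hI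
          obtain ⟨⟨hsub, hdm, hcard⟩, hmem⟩ := hI
          rw [mem_Tst]
          refine ⟨?_, ?_, ?_⟩
          · intro x hx
            rcases Finset.mem_erase.1 hx with ⟨hne, hxI⟩
            have := Finset.mem_Icc.1 (hsub hxI)
            exact Finset.mem_Icc.2 ⟨this.1, by omega⟩
          · exact (dm_mem_iff m I hsub hmem).1 hdm
          · rw [Finset.card_erase_of_mem hmem, hcard]; omega
        case hj =>
          intro J hJ
          rw [mem_Tst] at hJ
          obtain ⟨hsub, hdm, hcard⟩ := hJ
          have hnmJ : m+1 ∉ J := fun h => by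
            have := (Finset.mem_Icc.1 (hsub h)).2; omega
          have hsub' : insert (m+1) J ⊆ Finset.Icc 1 (m+1) := by
            intro x hx
            rcases Finset.mem_insert.1 hx with rfl | hx'
            · exact Finset.mem_Icc.2 ⟨by omega, le_rfl⟩
            · have := Finset.mem_Icc.1 (hsub hx')
              exact Finset.mem_Icc.2 ⟨this.1, by omega⟩
          rw [Finset.mem_filter, mem_Tst]
          refine ⟨⟨hsub', ?_, ?_⟩, Finset.mem_insert_self _ _⟩
          · rw [dm_mem_iff m _ hsub' (Finset.mem_insert_self _ _),
              Finset.erase_insert hnmJ]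
            exact hdm
          · rw [Finset.card_insert_of_notMem hnmJ, hcard]
        case left =>
          intro I hI
          rw [Finset.mem_filter] at hI
          exact Finset.insert_erase hI.2
        case right =>
          intro J hJ
          rw [mem_Tst] at hJ
          have hnmJ : m+1 ∉ J := fun h => by
            have := (Finset.mem_Icc.1 (hJ.1 h)).2; omega
          exact Finset.erase_insert hnmJ
      have hP2 : ((Tst (m+1) (a'+1)).filter (fun I => ¬ m+1 ∈ I)).card
          = if m+1 ≤ 2*(a'+1) then (Tst m (a'+1)).card else 0 := by
        by_cases hc : m+1 ≤ 2*(a'+1)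
        · rw [if_pos hc]
          congr 1
          ext I
          rw [Finset.mem_filter, mem_Tst, mem_Tst]
          constructor
          · rintro ⟨⟨hsub, hdm, hcard⟩, hnm⟩
            have hsub' : I ⊆ Finset.Icc 1 m := by
              intro x hx
              have h1 := Finset.mem_Icc.1 (hsub hx)
              have : x ≠ m+1 := fun h => hnm (h ▸ hx)
              exact Finset.mem_Icc.2 ⟨h1.1, by omega⟩
            exact ⟨hsub', ((dm_notmem_iff m I hsub').1 hdm).1, hcard⟩
          · rintro ⟨hsub, hdm, hcard⟩
            have hnm : m+1 ∉ I := fun h => by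
              have := (Finset.mem_Icc.1 (hsub h)).2; omega
            refine ⟨⟨?_, ?_, hcard⟩, hnm⟩
            · intro x hx
              have := Finset.mem_Icc.1 (hsub hx)
              exact Finset.mem_Icc.2 ⟨this.1, by omega⟩
            · exact (dm_notmem_iff m I hsub).2 ⟨hdm, by omega⟩
        · rw [if_neg hc, Finset.card_eq_zero]
          apply Finset.eq_empty_of_forall_notMem
          intro I hI
          rw [Finset.mem_filter, mem_Tst] at hI
          obtain ⟨⟨hsub, hdm, hcard⟩, hnm⟩ := hI
          have hsub' : I ⊆ Finset.Icc 1 m := by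
            intro x hx
            have h1 := Finset.mem_Icc.1 (hsub hx)
            have : x ≠ m+1 := fun h => hnm (h ▸ hx)
            exact Finset.mem_Icc.2 ⟨h1.1, by omega⟩
          have := ((dm_notmem_iff m I hsub').1 hdm).2
          omega
      rw [hP1, hP2, ih a']
      rw [v_rec m a']
      by_cases hc : m+1 ≤ 2*(a'+1)
      · rw [if_pos hc, if_pos hc, ih (a'+1)]
      · rw [if_neg hc, if_neg hc]

theorem choose_dec' {N k : ℕ} (h : N+1 ≤ 2*(k+1)) : Nat.choose N (k+1) ≤ Nat.choose N k := by
  rcases Nat.lt_or_ge N (2*(k+1)) with h' | h'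
  · rcases Nat.lt_or_ge N (2*k+1) with h'' | h''
    · exact choose_dec (by omega)
    · have hN : N = 2*k+1 := by omega
      subst hN
      exact (Nat.choose_symm_half k).le
  · omega

theorem telesc (N a0 : ℕ) (h : N+1 ≤ 2*a0) (h1 : 1 ≤ a0) (c : ℕ) :
    (∑ i ∈ Finset.range c,
        (Nat.choose (N+1) (a0+2*i) - Nat.choose (N+1) (a0+2*i+1)))
      + Nat.choose N (a0-1+2*c) = Nat.choose N (a0-1) := by
  induction c with
  | zero => simp
  | succ c ihc =>
    rw [Finset.sum_range_succ]
    have hk : a0 + 2*c = (a0 + 2*c - 1) + 1 := by omega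
    set k := a0 + 2*c with hkdef
    have e1 : Nat.choose (N+1) k = Nat.choose N (k-1) + Nat.choose N k := by
      rw [hk]; exact Nat.choose_succ_succ N (a0+2*c-1)
    have e2 : Nat.choose (N+1) (k+1) = Nat.choose N k + Nat.choose N (k+1) := by
      exact Nat.choose_succ_succ N k
    have hyx : Nat.choose N k ≤ Nat.choose N (k-1) := by
      rw [hk]; exact choose_dec' (by omega)
    have hzy : Nat.choose N (k+1) ≤ Nat.choose N k := choose_dec' (by omega)
    have hterm : Nat.choose (N+1) k - Nat.choose (N+1) (k+1)
        = Nat.choose N (k-1) - Nat.choose N (k+1) := by omega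
    have hBD : Nat.choose N (k+1) ≤ Nat.choose N (k-1) := le_trans hzy hyx
    have hrw1 : a0 - 1 + 2*c = k - 1 := by omega
    have hrw2 : a0 - 1 + 2*(c+1) = k + 1 := by omega
    rw [hrw1] at ihc
    rw [hrw2, hterm]
    omega

theorem sum_even_upper (n : ℕ) (hn : 1 ≤ n) :
    (∑ a ∈ Finset.range (2*n+1),
        (if Even a ∧ 2*n ≤ 2*a then Nat.choose (2*n) a - Nat.choose (2*n) (a+1) else 0))
      = Nat.choose (2*n-1) n := by
  set w : ℕ → ℕ := fun a => Nat.choose (2*n) a - Nat.choose (2*n) (a+1) with hw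
  obtain ⟨a0, c, ha0even, ha0n, ha0c, ha0lo, hc1⟩ :
      ∃ a0 c : ℕ, a0 % 2 = 0 ∧ n ≤ a0 ∧ a0 ≤ n + 1 ∧ a0 + 2*(c-1) = 2*n ∧ 1 ≤ c := by
    rcases Nat.even_or_odd n with ⟨r, hr⟩ | ⟨r, hr⟩
    · exact ⟨n, r + 1, by omega, le_rfl, by omega, by omega, by omega⟩
    · exact ⟨n+1, r + 1, by omega, by omega, le_rfl, by omega, by omega⟩
  have hset : (Finset.range (2*n+1)).filter (fun a => Even a ∧ 2*n ≤ 2*a)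
      = (Finset.range c).image (fun i => a0 + 2*i) := by
    ext a
    simp only [Finset.mem_filter, Finset.mem_image, Finset.mem_range, Nat.even_iff]
    constructor
    · rintro ⟨hlt, hpar, hge⟩
      exact ⟨(a - a0)/2, by omega, by omega⟩
    · rintro ⟨i, hi, rfl⟩
      refine ⟨by omega, by omega, by omega⟩
  rw [← Finset.sum_filter, hset, Finset.sum_image (by intro x _ y _ h; simp only at h; omega)]
  have N1 : 2*n = (2*n-1)+1 := by omega
  have := telesc (2*n-1) a0 (by omega) (by omega) c
  rw [← N1] at this
  have hzero : Nat.choose (2*n-1) (a0-1+2*c) = 0 :=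
    Nat.choose_eq_zero_of_lt (by omega)
  rw [hzero, add_zero] at this
  rw [this]
  rcases Nat.lt_or_ge (a0-1) n with hlt | hge
  · -- a0 = n, n even, a0 - 1 = n - 1
    have h1 : a0 - 1 = n - 1 := by omega
    have h3 := Nat.choose_symm (n := 2*n-1) (k := n-1) (by omega)
    rw [show (2*n-1)-(n-1) = n by omega] at h3
    rw [h1, ← h3]
  · have : a0 - 1 = n := by omega
    rw [this]

theorem standard_partitions_card (n : ℕ) (hn : 1 ≤ n) :
    {I : Finset ℕ | IsStandardPart n I ∧ Even I.card ∧
        Even (Finset.Icc 1 (2 * n) \ I).card}.ncard = Nat.choose (2 * n - 1) n := by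
  set F : Finset (Finset ℕ) := ((Finset.Icc 1 (2*n)).powerset).filter
    (fun I => IsStandardPart n I ∧ Even I.card ∧
      Even ((Finset.Icc 1 (2*n)) \ I).card) with hF
  have hset : {I : Finset ℕ | IsStandardPart n I ∧ Even I.card ∧
      Even (Finset.Icc 1 (2 * n) \ I).card} = ↑F := by
    ext I
    simp only [Set.mem_setOf_eq, hF, Finset.coe_filter, Finset.mem_powerset]
    constructor
    · intro h
      exact ⟨h.1.1, h⟩
    · intro h
      exact h.2
  rw [hset, Set.ncard_coe_finset]
  have hf : ∀ I ∈ F, I.card ∈ Finset.range (2*n+1) := by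
    intro I hI
    rw [hF, Finset.mem_filter, Finset.mem_powerset] at hI
    have := Finset.card_le_card hI.1
    rw [Nat.card_Icc] at this
    rw [Finset.mem_range]
    omega
  rw [Finset.card_eq_sum_card_fiberwise hf]
  rw [Finset.sum_congr rfl (fun a ha => ?_)]
  · exact sum_even_upper n hn
  · -- fiber card
    by_cases hEv : Even a
    · have hfib : F.filter (fun I => I.card = a) = Tst (2*n) a := by
        ext I
        rw [Finset.mem_filter, mem_Tst, hF, Finset.mem_filter, Finset.mem_powerset]
        constructor
        · rintro ⟨⟨hsub, hstd, _, _⟩, hcard⟩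
          exact ⟨hsub, ((std_iff n I).1 hstd).2, hcard⟩
        · rintro ⟨hsub, hdm, hcard⟩
          have hstd : IsStandardPart n I := (std_iff n I).2 ⟨hsub, hdm⟩
          have hle : I.card ≤ 2*n := by
            have := Finset.card_le_card hsub
            rwa [Nat.card_Icc] at this
          have hco : (Finset.Icc 1 (2*n) \ I).card = 2*n - I.card := by
            rw [Finset.card_sdiff_of_subset hsub, Nat.card_Icc]; omega
          have hcoEv : Even ((Finset.Icc 1 (2*n) \ I).card) := by
            rw [hco, hcard]
            rcases hEv with ⟨r, hr⟩
            exact ⟨n - r, by omega⟩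
          exact ⟨⟨hsub, hstd, hcard ▸ hEv, hcoEv⟩, hcard⟩
      rw [hfib, tst_card]
      have hv : v (2*n) a = if 2*n ≤ 2*a then Nat.choose (2*n) a - Nat.choose (2*n) (a+1) else 0 := rfl
      rw [hv]
      simp [hEv]
    · have hfib : F.filter (fun I => I.card = a) = ∅ := by
        apply Finset.eq_empty_of_forall_notMem
        intro I hI
        rw [Finset.mem_filter, hF, Finset.mem_filter] at hI
        obtain ⟨⟨hsub, hstd, hev, _⟩, hcard⟩ := hI
        exact hEv (hcard ▸ hev)
      rw [hfib]
      simp [hEv]
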